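/- Let n ≥ 2 and let λ : Fin n → ℂ satisfy the hyperbolicity hypothesis: for all i ≠ j, the pair (λ i, λ j) is linearly independent over ℝ. Define g : EuclideanSpace ℂ (Fin n) → ℂ by g(z) = ∑ i, λ i * ‖z i‖². Then the zero set V = g⁻¹(0) has an isolated singularity at the origin: for every z ∈ V with z ≠ 0, the real Fréchet derivative fderiv ℝ g z is a surjective real-linear map onto ℂ. Consequently V ∖ {0} is a smooth real submanifold of ℂⁿ of real codimension 2, cut out by the two real equations Re g = 0 and Im g = 0. -/

import Mathlib

open scoped RealInnerProductSpace


private lemma siegel_aux (x : ℂ) (hx : x ≠ 0) (a : ℝ) :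
    (2 : ℝ) * ⟪x, ((a / (2 * ‖x‖ ^ 2) : ℝ)) • x⟫ = a := by
  rw [real_inner_smul_right, real_inner_self_eq_norm_sq]
  have hx2 : ‖x‖ ^ 2 ≠ 0 := pow_ne_zero 2 (norm_ne_zero_iff.mpr hx)
  field_simp

set_option maxHeartbeats 800000

/-- Let `λ : Fin n → ℂ` (`n ≥ 2`) satisfy the
hyperbolicity hypothesis: for `i ≠ j` the pair `(λ i, λ j)` is linearly
independent over `ℝ`. Then the zero set of
`g z = ∑ i, λ i * ‖z i‖²` has an isolated singularity at the origin: at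
every `z ≠ 0` with `g z = 0`, the real Fréchet derivative of `g` is
surjective onto `ℂ` (so `V ∖ {0}` is a smooth codimension-2 real
submanifold, cut out by `Re g = 0` and `Im g = 0`). -/
theorem siegel_quadrics_isolated_singularity
    (n : ℕ) (hn : 2 ≤ n) (lam : Fin n → ℂ)
    (hyp : ∀ i j : Fin n, i ≠ j → LinearIndependent ℝ ![lam i, lam j]) :
    ∀ z : EuclideanSpace ℂ (Fin n),
      (∑ i, lam i * ((‖z i‖ ^ 2 : ℝ) : ℂ)) = 0 → z ≠ 0 →
        Function.Surjective
          (fderiv ℝ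
            (fun z : EuclideanSpace ℂ (Fin n) =>
              ∑ i, lam i * ((‖z i‖ ^ 2 : ℝ) : ℂ)) z) := by
  intro z hz hz0
  haveI : Nontrivial (Fin n) := Fin.nontrivial_iff_two_le.mpr hn
  -- each lam i ≠ 0
  have hlam : ∀ i, lam i ≠ 0 := by
    intro i
    obtain ⟨j, hj⟩ := exists_ne i
    have h := (hyp i j (Ne.symm hj)).ne_zero 0
    simpa using h
  -- the derivative
  set D : EuclideanSpace ℂ (Fin n) →L[ℝ] ℂ :=
    ∑ i, (lam i) • (Complex.ofRealCLM.comp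
      ((2 : ℕ) • (innerSL ℝ (z i)).comp ((EuclideanSpace.proj i).restrictScalars ℝ))) with hD
  have hder : HasFDerivAt (fun z : EuclideanSpace ℂ (Fin n) =>
      ∑ i, lam i * ((‖z i‖ ^ 2 : ℝ) : ℂ)) D z := by
    apply HasFDerivAt.fun_sum
    intro i _
    have h1 : HasFDerivAt (fun w : EuclideanSpace ℂ (Fin n) => w i)
        ((EuclideanSpace.proj i).restrictScalars ℝ) z :=
      ((EuclideanSpace.proj (𝕜 := ℂ) i).restrictScalars ℝ).hasFDerivAt
    have h2 := h1.norm_sq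
    have h3 := Complex.ofRealCLM.hasFDerivAt.comp z h2
    exact h3.const_mul (lam i)
  have hfd : fderiv ℝ (fun z : EuclideanSpace ℂ (Fin n) =>
      ∑ i, lam i * ((‖z i‖ ^ 2 : ℝ) : ℂ)) z = D := hder.fderiv
  rw [hfd]
  -- find two nonzero coordinates
  obtain ⟨i, hi⟩ : ∃ i, z i ≠ 0 := by
    by_contra h
    push_neg at h
    exact hz0 (PiLp.ext fun k => by simp [h k])
  obtain ⟨j, hji, hj⟩ : ∃ j, j ≠ i ∧ z j ≠ 0 := by
    by_contra h
    push_neg at h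
    have hsum : (∑ k, lam k * ((‖z k‖ ^ 2 : ℝ) : ℂ)) = lam i * ((‖z i‖ ^ 2 : ℝ) : ℂ) :=
      Finset.sum_eq_single_of_mem i (Finset.mem_univ i)
        (fun k _ hk => by simp [h k hk])
    rw [hsum] at hz
    have : lam i = 0 := by
      rcases mul_eq_zero.mp hz with h' | h'
      · exact h'
      · exfalso
        have : ‖z i‖ ^ 2 = 0 := by exact_mod_cast h'
        exact hi (norm_eq_zero.mp (by nlinarith [norm_nonneg (z i)]))
    exact hlam i this
  -- span ℝ {lam i, lam j} = ⊤
  have hij : i ≠ j := Ne.symm hji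
  have hspan : Submodule.span ℝ {lam i, lam j} = ⊤ := by
    have := (hyp i j hij).span_eq_top_of_card_eq_finrank
      (by simp [Complex.finrank_real_complex])
    rw [← this]
    congr 1
    simp only [Matrix.range_cons, Matrix.range_empty, Set.union_empty]
    rfl
  intro w
  have hw : w ∈ Submodule.span ℝ ({lam i, lam j} : Set ℂ) := hspan ▸ Submodule.mem_top
  obtain ⟨a, b, hab⟩ := Submodule.mem_span_pair.mp hw
  -- build preimage
  refine ⟨(WithLp.toLp 2 (fun k => if k = i then ((a / (2 * ‖z i‖ ^ 2) : ℝ)) • z i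
      else if k = j then ((b / (2 * ‖z j‖ ^ 2) : ℝ)) • z j else 0) :
      EuclideanSpace ℂ (Fin n)), ?_⟩
  set v : EuclideanSpace ℂ (Fin n) := WithLp.toLp 2 (fun k => if k = i then ((a / (2 * ‖z i‖ ^ 2) : ℝ)) • z i
      else if k = j then ((b / (2 * ‖z j‖ ^ 2) : ℝ)) • z j else 0) with hv
  have hDv : D v = ∑ k, lam k * (((2 * ⟪z k, v k⟫) : ℝ) : ℂ) := by
    rw [hD, ContinuousLinearMap.sum_apply]
    refine Finset.sum_congr rfl fun k _ => ?_
    simp only [ContinuousLinearMap.smul_apply, ContinuousLinearMap.comp_apply,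
      ContinuousLinearMap.coe_restrictScalars', innerSL_apply_apply, Complex.ofRealCLM_apply,
      smul_eq_mul, nsmul_eq_mul, Nat.cast_ofNat]
    rfl
  rw [hDv]
  have hvi : v i = ((a / (2 * ‖z i‖ ^ 2) : ℝ)) • z i := by rw [hv]; simp
  have hvj : v j = ((b / (2 * ‖z j‖ ^ 2) : ℝ)) • z j := by rw [hv]; simp [hji]
  have hterm : ∀ k, lam k * (((2 * ⟪z k, v k⟫) : ℝ) : ℂ)
      = (if k = i then a • lam i else 0) + (if k = j then b • lam j else 0) := by
    intro k
    by_cases hk : k = i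
    · subst hk
      rw [if_pos rfl, if_neg hij, add_zero, hvi, siegel_aux (z k) hi a,
        Complex.real_smul, mul_comm]
    · by_cases hk' : k = j
      · subst hk'
        rw [if_neg hk, if_pos rfl, zero_add, hvj, siegel_aux (z k) hj b,
          Complex.real_smul, mul_comm]
      · have hvk : v k = 0 := by rw [hv]; simp [hk, hk']
        rw [if_neg hk, if_neg hk', add_zero, hvk, inner_zero_right]
        simp
  rw [Finset.sum_congr rfl (fun k _ => hterm k), Finset.sum_add_distrib,
    Finset.sum_ite_eq' Finset.univ i, Finset.sum_ite_eq' Finset.univ j]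
  simpa using hab
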